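/- For each integer n ≥ 3 define f_n : {1,…,n} → ℕ by f_n(n) = 0 and, for 1 ≤ k < n, f_n(k) = ⌈log((1/2)^{f_n(k+1)} · (1/3)) / log(1/2 + 1/n)⌉. Then there exist constants C > 0 and c > 0 such that for all integers n ≥ 3 and all k with 1 ≤ k ≤ n: f_n(k) ≤ C·n^c. -/

import Mathlib

/-- Auxiliary recursion for the gadget sizes in the difference policy iteration
lower bound: `fGadgetAux n m` is the gadget size at distance m from the top
vertex n, i.e. f_n(n − m). -/
noncomputable def fGadgetAux (n : ℕ) : ℕ → ℕ
  | 0 => 0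
  | m + 1 =>
      ⌈Real.log ((1 / 2 : ℝ) ^ (fGadgetAux n m) * (1 / 3)) /
        Real.log (1 / 2 + 1 / (n : ℝ))⌉₊

/-- The gadget size f_n(k) for 1 ≤ k ≤ n: f_n(n) = 0 and
f_n(k) = ⌈log((1/2)^{f_n(k+1)} · (1/3)) / log(1/2 + 1/n)⌉ for 1 ≤ k < n. -/
noncomputable def fGadget (n k : ℕ) : ℕ := fGadgetAux n (n - k)

/-- The gadget sizes f_n(k) are polynomially bounded: there exist constants
C > 0 and c > 0 with f_n(k) ≤ C·n^c for all n ≥ 3 and 1 ≤ k ≤ n, so the whole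
difference-PI lower-bound construction has polynomial size. -/
theorem fGadget_poly_bound :
    ∃ C c : ℝ, 0 < C ∧ 0 < c ∧
      ∀ n : ℕ, 3 ≤ n → ∀ k : ℕ, 1 ≤ k → k ≤ n →
        (fGadget n k : ℝ) ≤ C * (n : ℝ) ^ c := by
  refine ⟨13 * Real.exp 12, 1, by positivity, one_pos, ?_⟩
  intro n hn k hk1 hkn
  have hn0 : (0:ℝ) < n := by positivity
  have hn3 : (3:ℝ) ≤ n := by exact_mod_cast hn
  obtain ⟨q, hq⟩ : ∃ q : ℝ, q = 1/2 + 1/(n:ℝ) := ⟨_, rfl⟩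
  have hq_pos : 0 < q := by rw [hq]; positivity
  have hq56 : q ≤ 5/6 := by
    have h1 : (1:ℝ)/(n:ℝ) ≤ 1/3 := by
      rw [div_le_div_iff₀ hn0 (by norm_num)]; linarith
    rw [hq]; linarith
  have hq_half : (1:ℝ)/2 < q := by
    have h1 : (0:ℝ) < 1/(n:ℝ) := by positivity
    rw [hq]; linarith
  have hq_lt1 : q < 1 := by linarith
  obtain ⟨L, hLdef⟩ : ∃ L : ℝ, L = -Real.log q := ⟨_, rfl⟩
  have hL_pos : 0 < L := by
    have := Real.log_neg hq_pos hq_lt1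
    rw [hLdef]; linarith
  have hlog56 : Real.log (5/6 : ℝ) ≤ -(1/6) := by
    have := Real.log_le_sub_one_of_pos (show (0:ℝ) < 5/6 by norm_num); linarith
  have hL16 : (1/6 : ℝ) ≤ L := by
    have h1 : Real.log q ≤ Real.log (5/6) := Real.log_le_log hq_pos hq56
    rw [hLdef]; linarith
  have hlog2_le1 : Real.log 2 ≤ 1 := by
    have := Real.log_le_sub_one_of_pos (show (0:ℝ) < 2 by norm_num); linarith
  have hL_lt_log2 : L < Real.log 2 := by
    have h1 : Real.log (1/2) < Real.log q := Real.log_lt_log (by norm_num) hq_half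
    have h2 : Real.log (1/2 : ℝ) = -Real.log 2 := by
      rw [show (1/2 : ℝ) = 2⁻¹ by norm_num, Real.log_inv]
    rw [hLdef]; linarith
  -- log(1 + 2/n) facts
  have hx_pos : (0:ℝ) < 1 + 2/(n:ℝ) := by positivity
  have hsplit : Real.log (1 + 2/(n:ℝ)) = Real.log 2 - L := by
    have h2q : (1 + 2/(n:ℝ)) = 2 * q := by rw [hq]; ring
    rw [h2q, Real.log_mul (by norm_num) (ne_of_gt hq_pos), hLdef]; ring
  have hlog_up : Real.log (1 + 2/(n:ℝ)) ≤ 2/(n:ℝ) := by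
    have := Real.log_le_sub_one_of_pos hx_pos; linarith
  have hlog_lo : 1/(n:ℝ) ≤ Real.log (1 + 2/(n:ℝ)) := by
    have hinv : Real.log ((1 + 2/(n:ℝ))⁻¹) ≤ (1 + 2/(n:ℝ))⁻¹ - 1 :=
      Real.log_le_sub_one_of_pos (by positivity)
    rw [Real.log_inv] at hinv
    have h1 : 1 - (1 + 2/(n:ℝ))⁻¹ ≤ Real.log (1 + 2/(n:ℝ)) := by linarith
    have h2 : 1 - (1 + 2/(n:ℝ))⁻¹ = 2/((n:ℝ)+2) := by
      field_simp
      ring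
    have h3 : (1:ℝ)/(n:ℝ) ≤ 2/((n:ℝ)+2) := by
      rw [div_le_div_iff₀ hn0 (by linarith)]; linarith
    linarith [h2 ▸ h1]
  -- r and b
  obtain ⟨r, hrdef⟩ : ∃ r : ℝ, r = Real.log 2 / L := ⟨_, rfl⟩
  obtain ⟨b, hbdef⟩ : ∃ b : ℝ, b = Real.log 3 / L + 1 := ⟨_, rfl⟩
  have hr1 : 1 < r := by
    rw [hrdef, lt_div_iff₀ hL_pos]; linarith
  have hr_sub : r - 1 = Real.log (1 + 2/(n:ℝ)) / L := by
    rw [hrdef, hsplit]; field_simp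
  have hr_lo : 1/(n:ℝ) ≤ r - 1 := by
    rw [hr_sub]
    have hL1 : L ≤ 1 := by linarith
    calc (1:ℝ)/(n:ℝ) ≤ (1/(n:ℝ)) / L := by
          rw [le_div_iff₀ hL_pos]
          nlinarith [le_of_lt hn0]
      _ ≤ Real.log (1 + 2/(n:ℝ)) / L := by gcongr
  have hr_up : r - 1 ≤ 12/(n:ℝ) := by
    rw [hr_sub]
    calc Real.log (1 + 2/(n:ℝ)) / L ≤ (2/(n:ℝ)) / L := by gcongr
      _ ≤ (2/(n:ℝ)) / (1/6) := by gcongr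
      _ = 12/(n:ℝ) := by ring
  have hr_pow : r ^ n ≤ Real.exp 12 := by
    have h1 : r ≤ Real.exp (r - 1) := by
      have := Real.add_one_le_exp (r - 1); linarith
    calc r ^ n ≤ (Real.exp (r-1)) ^ n := by
          apply pow_le_pow_left₀ (by linarith) h1
      _ = Real.exp ((n:ℝ) * (r-1)) := by rw [← Real.exp_nat_mul]
      _ ≤ Real.exp 12 := by
          apply Real.exp_le_exp.mpr
          have : (n:ℝ) * (r - 1) ≤ (n:ℝ) * (12/(n:ℝ)) := by
            apply mul_le_mul_of_nonneg_left hr_up (le_of_lt hn0)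
          have h2 : (n:ℝ) * (12/(n:ℝ)) = 12 := by field_simp
          linarith
  have hlog3 : Real.log 3 ≤ 2 := by
    have := Real.log_le_sub_one_of_pos (show (0:ℝ) < 3 by norm_num); linarith
  have hlog3_pos : 0 < Real.log 3 := Real.log_pos (by norm_num)
  have hb1 : 1 ≤ b := by
    rw [hbdef]
    have : 0 ≤ Real.log 3 / L := by positivity
    linarith
  have hb13 : b ≤ 13 := by
    rw [hbdef]
    have h1 : Real.log 3 / L ≤ 2 / L := by gcongr
    have h2 : 2 / L ≤ 2 / (1/6 : ℝ) := by gcongr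
    have : (2:ℝ)/(1/6) = 12 := by norm_num
    linarith
  have hr_ne : r - 1 ≠ 0 := by linarith
  have hr0 : (0:ℝ) < r := by linarith
  -- key induction
  have key : ∀ m : ℕ, (fGadgetAux n m : ℝ) ≤ b * (r ^ m - 1) / (r - 1) := by
    intro m
    induction m with
    | zero => simp [fGadgetAux]
    | succ m ih =>
      have hstep : fGadgetAux n (m+1) =
          ⌈Real.log ((1 / 2 : ℝ) ^ (fGadgetAux n m) * (1 / 3)) /
            Real.log (1 / 2 + 1 / (n : ℝ))⌉₊ := rfl
      obtain ⟨a, ha⟩ : ∃ a : ℕ, a = fGadgetAux n m := ⟨_, rfl⟩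
      have hX : Real.log ((1 / 2 : ℝ) ^ a * (1 / 3)) /
            Real.log (1 / 2 + 1 / (n : ℝ)) = ((a:ℝ) * Real.log 2 + Real.log 3) / L := by
        have hnum : Real.log ((1 / 2 : ℝ) ^ a * (1 / 3)) =
            -(((a:ℝ)) * Real.log 2 + Real.log 3) := by
          rw [Real.log_mul (by positivity) (by norm_num), Real.log_pow,
            show (1/2 : ℝ) = 2⁻¹ by norm_num, show (1/3 : ℝ) = 3⁻¹ by norm_num,
            Real.log_inv, Real.log_inv]
          ring
        have hden : Real.log (1 / 2 + 1 / (n : ℝ)) = -L := by rw [hLdef, hq]; ring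
        rw [hnum, hden, neg_div_neg_eq]
      have hX_nonneg : 0 ≤ ((a:ℝ) * Real.log 2 + Real.log 3) / L := by
        have := Real.log_pos (show (1:ℝ) < 2 by norm_num)
        have hA : (0:ℝ) ≤ a := Nat.cast_nonneg a
        positivity
      have hceil : (fGadgetAux n (m+1) : ℝ) ≤ ((a:ℝ) * Real.log 2 + Real.log 3) / L + 1 := by
        rw [hstep, ← ha, hX]
        exact le_of_lt (Nat.ceil_lt_add_one hX_nonneg)
      have heq : ((a:ℝ) * Real.log 2 + Real.log 3) / L + 1 = r * a + b := by
        rw [hrdef, hbdef]; field_simp; ring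
      have hih : (a:ℝ) ≤ b * (r ^ m - 1) / (r - 1) := ha ▸ ih
      have hmono : r * (a:ℝ) + b ≤ r * (b * (r ^ m - 1) / (r - 1)) + b := by
        have := mul_le_mul_of_nonneg_left hih (le_of_lt hr0)
        linarith
      have hfinal : r * (b * (r ^ m - 1) / (r - 1)) + b = b * (r ^ (m+1) - 1) / (r - 1) := by
        field_simp; ring
      calc (fGadgetAux n (m+1) : ℝ) ≤ ((a:ℝ) * Real.log 2 + Real.log 3) / L + 1 := hceil
        _ = r * a + b := heq
        _ ≤ r * (b * (r ^ m - 1) / (r - 1)) + b := hmono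
        _ = b * (r ^ (m+1) - 1) / (r - 1) := hfinal
  -- final assembly
  have hpow : r ^ (n - k) - 1 ≤ r ^ n := by
    have : r ^ (n - k) ≤ r ^ n := pow_le_pow_right₀ (le_of_lt hr1) (Nat.sub_le n k)
    linarith
  have hb0 : (0:ℝ) ≤ b := by linarith
  have h1 : (fGadget n k : ℝ) ≤ b * r ^ n / (r - 1) := by
    calc (fGadget n k : ℝ) = (fGadgetAux n (n - k) : ℝ) := rfl
      _ ≤ b * (r ^ (n-k) - 1) / (r - 1) := key (n - k)
      _ ≤ b * r ^ n / (r - 1) := by gcongr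
  have hinv : (r - 1)⁻¹ ≤ (n:ℝ) := by
    have h2 : (r-1)⁻¹ ≤ (1/(n:ℝ))⁻¹ := by
      apply inv_anti₀ (by positivity) hr_lo
    simpa using h2
  have hrn0 : (0:ℝ) ≤ r ^ n := by positivity
  have h3 : b * r ^ n ≤ 13 * Real.exp 12 := by
    apply mul_le_mul hb13 hr_pow hrn0 (by norm_num)
  calc (fGadget n k : ℝ) ≤ b * r ^ n / (r - 1) := h1
    _ = b * r ^ n * (r - 1)⁻¹ := by rw [div_eq_mul_inv]
    _ ≤ (13 * Real.exp 12) * (n:ℝ) := by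
        apply mul_le_mul h3 hinv (inv_nonneg.mpr (by linarith)) (by positivity)
    _ = 13 * Real.exp 12 * (n:ℝ) ^ (1:ℝ) := by rw [Real.rpow_one]
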